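/- Let L > n ≥ 0 be integers and let p, q be real parameters with p ≠ q. Then the restricted partition function is given explicitly by R(L, n; p, q) = ∑_{j=0}^{n} ((−1)^{n−j} / (j!·(n−j)!)) · (1 + j·p + (n−j)·q)^{L−1} / (p−q)^{n}. -/

import Mathlib

open Finset

/-- The stationary weight of a word `a` with entries in `{0,1}` (encoded as `Fin 2`):
the product over positions `i` with `a i = 0` of `1 + p·m_i(a) + q·n_i(a)`,
where `m_i(a)` (resp. `n_i(a)`) is the number of `1`'s strictly before (resp. after) `i`. -/
noncomputable def wt (p q : ℝ) {m : ℕ} (a : Fin m → Fin 2) : ℝ :=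
  ∏ i ∈ univ.filter (fun i => a i = 0),
    (1 + p * ((univ.filter (fun j => j < i ∧ a j = 1)).card : ℝ)
       + q * ((univ.filter (fun j => i < j ∧ a j = 1)).card : ℝ))

/-- The number of `1`'s in the word `a`. -/
def ones {m : ℕ} (a : Fin m → Fin 2) : ℕ := (univ.filter (fun i => a i = 1)).card

/-- The restricted partition function `R(L, n; p, q)`: the sum of the weights `wt p q a`
over all words `a` of length `L - 1` with entries in `{0,1}` having exactly `n` ones. -/
noncomputable def R (L n : ℕ) (p q : ℝ) : ℝ :=
  ∑ a ∈ univ.filter (fun a : Fin (L - 1) → Fin 2 => ones a = n), wt p q a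


noncomputable def wtu (u p q : ℝ) {m : ℕ} (a : Fin m → Fin 2) : ℝ :=
  ∏ i ∈ univ.filter (fun i => a i = 0),
    (u + p * ((univ.filter (fun j => j < i ∧ a j = 1)).card : ℝ)
       + q * ((univ.filter (fun j => i < j ∧ a j = 1)).card : ℝ))

def ones' {m : ℕ} (a : Fin m → Fin 2) : ℕ := (univ.filter (fun i => a i = 1)).card

lemma cnt_lt {m : ℕ} (x : Fin 2) (b : Fin m → Fin 2) (i : Fin m) :
    (univ.filter (fun j => j < i.succ ∧ (Fin.cons x b : Fin (m+1) → Fin 2) j = 1)).card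
      = (if x = 1 then 1 else 0) + (univ.filter (fun j => j < i ∧ b j = 1)).card := by
  simp only [Finset.card_filter]
  rw [Fin.sum_univ_succ]
  simp [Fin.succ_lt_succ_iff, Fin.succ_pos]

lemma cnt_gt {m : ℕ} (x : Fin 2) (b : Fin m → Fin 2) (i : Fin m) :
    (univ.filter (fun j => i.succ < j ∧ (Fin.cons x b : Fin (m+1) → Fin 2) j = 1)).card
      = (univ.filter (fun j => i < j ∧ b j = 1)).card := by
  simp only [Finset.card_filter]
  rw [Fin.sum_univ_succ]
  simp [Fin.succ_lt_succ_iff]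

lemma cnt_lt0 {m : ℕ} (a : Fin (m+1) → Fin 2) :
    (univ.filter (fun j => j < (0 : Fin (m+1)) ∧ a j = 1)).card = 0 := by
  simp

lemma cnt_gt0 {m : ℕ} (x : Fin 2) (b : Fin m → Fin 2) :
    (univ.filter (fun j : Fin (m+1) => (0 : Fin (m+1)) < j ∧ (Fin.cons x b : Fin (m+1) → Fin 2) j = 1)).card
      = ones' b := by
  simp only [Finset.card_filter, ones']
  rw [Fin.sum_univ_succ]
  simp [Fin.succ_pos]

lemma ones_cons {m : ℕ} (x : Fin 2) (b : Fin m → Fin 2) :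
    ones' (Fin.cons x b) = (if x = 1 then 1 else 0) + ones' b := by
  simp only [Finset.card_filter, ones']
  rw [Fin.sum_univ_succ]
  simp

lemma wtu_cons_zero {m : ℕ} (u p q : ℝ) (b : Fin m → Fin 2) :
    wtu u p q (Fin.cons 0 b) = (u + q * ones' b) * wtu u p q b := by
  rw [wtu, wtu, Finset.prod_filter, Finset.prod_filter, Fin.prod_univ_succ]
  rw [cnt_gt0]
  simp only [Fin.cons_zero, Fin.cons_succ, cnt_lt, cnt_gt, cnt_lt0]
  norm_num

lemma wtu_cons_one {m : ℕ} (u p q : ℝ) (b : Fin m → Fin 2) :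
    wtu u p q (Fin.cons 1 b) = wtu (u + p) p q b := by
  rw [wtu, wtu, Finset.prod_filter, Finset.prod_filter, Fin.prod_univ_succ]
  simp only [Fin.cons_zero, Fin.cons_succ, cnt_lt, cnt_gt]
  norm_num
  apply Finset.prod_congr rfl
  intro i _
  split <;> ring_nf

noncomputable def F (m n : ℕ) (u p q : ℝ) : ℝ :=
  ∑ a ∈ univ.filter (fun a : Fin m → Fin 2 => ones' a = n), wtu u p q a


lemma sum_cons_split {m : ℕ} (f : (Fin (m+1) → Fin 2) → ℝ) :
    ∑ a : Fin (m+1) → Fin 2, f a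
      = (∑ b : Fin m → Fin 2, f (Fin.cons 0 b)) + ∑ b : Fin m → Fin 2, f (Fin.cons 1 b) := by
  rw [← Equiv.sum_comp (Fin.consEquiv (fun _ => Fin 2)) f, Fintype.sum_prod_type,
    Fin.sum_univ_two]
  rfl

lemma F_rec (m n : ℕ) (u p q : ℝ) :
    F (m+1) (n+1) u p q = (u + q * (n+1)) * F m (n+1) u p q + F m n (u+p) p q := by
  rw [F, Finset.sum_filter, sum_cons_split]
  congr 1
  · rw [F, Finset.sum_filter, Finset.mul_sum]
    apply Finset.sum_congr rfl
    intro b _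
    rw [ones_cons, wtu_cons_zero]
    by_cases hb : ones' b = n + 1
    · simp [hb]
    · simp [hb]
  · rw [F, Finset.sum_filter]
    apply Finset.sum_congr rfl
    intro b _
    rw [ones_cons, wtu_cons_one]
    refine if_congr ?_ rfl rfl
    simp
    omega

lemma F_rec0 (m : ℕ) (u p q : ℝ) :
    F (m+1) 0 u p q = u * F m 0 u p q := by
  rw [F, Finset.sum_filter, sum_cons_split, F, Finset.sum_filter, Finset.mul_sum]
  have h2 : (∑ b : Fin m → Fin 2, if ones' (Fin.cons 1 b) = 0 then wtu u p q (Fin.cons 1 b) else 0) = 0 := by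
    apply Finset.sum_eq_zero
    intro b _
    rw [ones_cons]
    simp
  rw [h2, add_zero]
  apply Finset.sum_congr rfl
  intro b _
  rw [ones_cons, wtu_cons_zero]
  by_cases hb : ones' b = 0
  · simp [hb]
  · simp [hb]

lemma F_zero (m : ℕ) (u p q : ℝ) : F m 0 u p q = u ^ m := by
  induction m with
  | zero =>
    rw [F]
    rw [show (univ.filter (fun a : Fin 0 → Fin 2 => ones' a = 0)) = {fun i => i.elim0} by
      ext a
      simp only [Finset.mem_filter, Finset.mem_univ, true_and, Finset.mem_singleton]
      constructor
      · intro _; exact Subsingleton.elim _ _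
      · intro _; simp [ones']]
    simp [wtu]
  | succ m ih => rw [F_rec0, ih, pow_succ]; ring

lemma F_zero_len (n : ℕ) (u p q : ℝ) : F 0 (n+1) u p q = 0 := by
  rw [F]
  rw [show (univ.filter (fun a : Fin 0 → Fin 2 => ones' a = n+1)) = ∅ by
    ext a; simp [ones']]
  simp


noncomputable def G (m n : ℕ) (u p q : ℝ) : ℝ :=
  ∑ j ∈ Finset.range (n + 1),
    (-1:ℝ) ^ (n - j) / ((j.factorial : ℝ) * ((n - j).factorial : ℝ))
      * (u + (j:ℝ) * p + ((n - j : ℕ) : ℝ) * q) ^ m / (p - q) ^ n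

lemma G_zero (m : ℕ) (u p q : ℝ) : G m 0 u p q = u ^ m := by
  simp [G]

lemma alt_sum (N : ℕ) (hN : N ≠ 0) :
    ∑ j ∈ Finset.range (N + 1),
      (-1:ℝ) ^ (N - j) / ((j.factorial : ℝ) * ((N - j).factorial : ℝ)) = 0 := by
  have key : ∑ j ∈ Finset.range (N + 1), (-1:ℝ) ^ j * (N.choose j : ℝ) = 0 := by
    have h := Int.alternating_sum_range_choose_of_ne hN
    have h2 := congrArg (fun z : ℤ => (z : ℝ)) h
    push_cast at h2
    simpa using h2
  have hNf : (N.factorial : ℝ) ≠ 0 := Nat.cast_ne_zero.mpr N.factorial_ne_zero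
  calc ∑ j ∈ Finset.range (N + 1),
        (-1:ℝ) ^ (N - j) / ((j.factorial : ℝ) * ((N - j).factorial : ℝ))
      = ∑ j ∈ Finset.range (N + 1),
        (-1:ℝ) ^ (N - j) * (N.choose j : ℝ) / (N.factorial : ℝ) := by
        apply Finset.sum_congr rfl
        intro j hj
        rw [Finset.mem_range] at hj
        have hj' : j ≤ N := by omega
        have hc : ((N.choose j : ℕ) : ℝ) * (j.factorial : ℝ) * ((N - j).factorial : ℝ)
            = (N.factorial : ℝ) := by
          exact_mod_cast congrArg (fun z : ℕ => (z : ℝ))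
            (Nat.choose_mul_factorial_mul_factorial hj')
        have hjj : ((j.factorial : ℝ) * ((N - j).factorial : ℝ)) ≠ 0 := by
          positivity
        rw [div_eq_div_iff hjj hNf, ← hc]
        ring
      _ = (∑ j ∈ Finset.range (N + 1), (-1:ℝ) ^ (N - j) * (N.choose j : ℝ)) / N.factorial := by
        rw [Finset.sum_div]
      _ = 0 := by
        rw [div_eq_zero_iff]
        left
        calc ∑ j ∈ Finset.range (N + 1), (-1:ℝ) ^ (N - j) * (N.choose j : ℝ)
            = (-1:ℝ)^N * ∑ j ∈ Finset.range (N + 1), (-1:ℝ) ^ j * (N.choose j : ℝ) := by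
              rw [Finset.mul_sum]
              apply Finset.sum_congr rfl
              intro j hj
              rw [Finset.mem_range] at hj
              have h1 : ((-1:ℝ)^j)*((-1:ℝ)^j) = 1 := by
                rw [← pow_add, Even.neg_one_pow ⟨j, rfl⟩]
              have h2 : (-1:ℝ)^(N-j) * ((-1:ℝ)^j) = (-1:ℝ)^N := by
                rw [← pow_add]
                congr 1
                omega
              calc (-1:ℝ)^(N-j) * (N.choose j : ℝ)
                  = ((-1:ℝ)^(N-j) * ((-1:ℝ)^j)) * (((-1:ℝ)^j)* (N.choose j : ℝ)) := by
                    rw [show ((-1:ℝ)^(N-j) * ((-1:ℝ)^j)) * (((-1:ℝ)^j)* (N.choose j : ℝ))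
                      = (-1:ℝ)^(N-j) * ((((-1:ℝ)^j))*(((-1:ℝ)^j))) * (N.choose j : ℝ) by ring,
                      h1]
                    ring
                _ = (-1:ℝ)^N * ((-1:ℝ)^j * (N.choose j : ℝ)) := by rw [h2]
          _ = 0 := by rw [key, mul_zero]

lemma G_len0 (n : ℕ) (u p q : ℝ) : G 0 (n+1) u p q = 0 := by
  rw [G]
  have : ∀ j ∈ Finset.range (n+2),
      (-1:ℝ) ^ (n+1 - j) / ((j.factorial : ℝ) * ((n+1 - j).factorial : ℝ))
        * (u + (j:ℝ) * p + ((n+1 - j : ℕ) : ℝ) * q) ^ 0 / (p - q) ^ (n+1)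
      = (-1:ℝ) ^ (n+1 - j) / ((j.factorial : ℝ) * ((n+1 - j).factorial : ℝ)) * ((p - q) ^ (n+1))⁻¹ := by
    intro j _
    rw [pow_zero]
    ring
  rw [Finset.sum_congr rfl this, ← Finset.sum_mul, alt_sum (n+1) (by omega), zero_mul]

lemma shuffle (n : ℕ) (f g h : ℕ → ℝ) (h0 : f 0 = g 0)
    (hstep : ∀ j, j < n + 1 → f (j+1) = g (j+1) + h j) :
    ∑ j ∈ Finset.range (n+2), f j
      = (∑ j ∈ Finset.range (n+2), g j) + ∑ j ∈ Finset.range (n+1), h j := by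
  rw [Finset.sum_range_succ' f, Finset.sum_range_succ' g, h0]
  rw [Finset.sum_congr rfl (fun j hj => hstep j (Finset.mem_range.mp hj)),
    Finset.sum_add_distrib]
  ring

lemma G_rec (m n : ℕ) (u p q : ℝ) (hpq : p - q ≠ 0) :
    G (m+1) (n+1) u p q = (u + q * (n+1)) * G m (n+1) u p q + G m n (u+p) p q := by
  rw [G, G, G, Finset.mul_sum]
  apply shuffle
  · show (-1:ℝ) ^ (n+1-0) / ((Nat.factorial 0 : ℝ) * ((n+1-0).factorial : ℝ))
        * (u + ((0:ℕ):ℝ) * p + ((n+1-0 : ℕ) : ℝ) * q) ^ (m+1) / (p - q) ^ (n+1)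
      = (u + q * (n+1)) * ((-1:ℝ) ^ (n+1-0) / ((Nat.factorial 0 : ℝ) * ((n+1-0).factorial : ℝ))
        * (u + ((0:ℕ):ℝ) * p + ((n+1-0 : ℕ) : ℝ) * q) ^ m / (p - q) ^ (n+1))
    push_cast
    ring
  · intro j hj
    have hj' : j ≤ n := by omega
    have e1 : n + 1 - (j + 1) = n - j := by omega
    have e2 : (j+1).factorial = (j+1) * j.factorial := Nat.factorial_succ j
    have hjf : (j.factorial : ℝ) ≠ 0 := Nat.cast_ne_zero.mpr j.factorial_ne_zero
    have hnjf : ((n - j).factorial : ℝ) ≠ 0 := Nat.cast_ne_zero.mpr (n - j).factorial_ne_zero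
    have hj1 : ((j:ℝ) + 1) ≠ 0 := by positivity
    show (-1:ℝ) ^ (n+1-(j+1)) / (((j+1).factorial : ℝ) * ((n+1-(j+1)).factorial : ℝ))
        * (u + ((j+1:ℕ):ℝ) * p + ((n+1-(j+1) : ℕ) : ℝ) * q) ^ (m+1) / (p - q) ^ (n+1)
      = (u + q * (n+1)) * ((-1:ℝ) ^ (n+1-(j+1)) / (((j+1).factorial : ℝ) * ((n+1-(j+1)).factorial : ℝ))
        * (u + ((j+1:ℕ):ℝ) * p + ((n+1-(j+1) : ℕ) : ℝ) * q) ^ m / (p - q) ^ (n+1))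
      + (-1:ℝ) ^ (n-j) / ((j.factorial : ℝ) * ((n-j).factorial : ℝ))
        * ((u + p) + (j:ℝ) * p + ((n-j : ℕ) : ℝ) * q) ^ m / (p - q) ^ n
    rw [e1, e2]
    push_cast
    field_simp
    rw [Nat.cast_sub hj']
    ring

lemma F_eq_G (p q : ℝ) (hpq : p ≠ q) : ∀ m n u, F m n u p q = G m n u p q := by
  intro m
  induction m with
  | zero =>
    intro n u
    cases n with
    | zero => rw [F_zero, G_zero]
    | succ n => rw [F_zero_len, G_len0]
  | succ m ih =>
    intro n u
    cases n with
    | zero => rw [F_zero, G_zero]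
    | succ n =>
      rw [F_rec, ih, ih, G_rec m n u p q (sub_ne_zero_of_ne hpq)]

/-- the explicit formula for the restricted partition function. -/
theorem R_explicit (L n : ℕ) (h : n < L) (p q : ℝ) (hpq : p ≠ q) :
    R L n p q = ∑ j ∈ Finset.range (n + 1),
      ((-1 : ℝ)) ^ (n - j) / ((j.factorial : ℝ) * ((n - j).factorial : ℝ))
        * (1 + (j : ℝ) * p + ((n - j : ℕ) : ℝ) * q) ^ (L - 1) / (p - q) ^ n := by
  have h1 : R L n p q = F (L-1) n 1 p q := rfl
  have h2 : G (L-1) n 1 p q = ∑ j ∈ Finset.range (n + 1),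
      ((-1 : ℝ)) ^ (n - j) / ((j.factorial : ℝ) * ((n - j).factorial : ℝ))
        * (1 + (j : ℝ) * p + ((n - j : ℕ) : ℝ) * q) ^ (L - 1) / (p - q) ^ n := rfl
  rw [h1, F_eq_G p q hpq, h2]
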